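/- Let n ≥ 1 and 0 ≤ t ≤ 1, and let T be the n×n real symmetric tridiagonal matrix with T[0,0] = 1, T[i,i] = 1 + t² for 1 ≤ i ≤ n−1, T[i,i+1] = T[i+1,i] = −t for 0 ≤ i ≤ n−2, and all other entries 0. If μ ∈ ℝ and x ∈ ℝ^n with x ≠ 0 satisfy T·x = μ·x, then (1 − t)² ≤ μ ≤ (1 + t)². -/

import Mathlib

open Finset Matrix

/-- The symmetric tridiagonal matrix `T = E_t⁻¹ (E_t⁻¹)ᵀ`:
`T[0,0] = 1`, `T[i,i] = 1 + t²` for `i ≥ 1`, `T[i,i±1] = −t`, all other entries `0`. -/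
noncomputable def Tmat (n : ℕ) (t : ℝ) : Matrix (Fin n) (Fin n) ℝ :=
  Matrix.of fun i j =>
    if i = j then (if (i : ℕ) = 0 then 1 else 1 + t ^ 2)
    else if Nat.dist (i : ℕ) (j : ℕ) = 1 then -t else 0

private lemma tsplit (t : ℝ) (i j : ℕ) :
    (if i = j then (if i = 0 then (1:ℝ) else 1 + t ^ 2)
      else if Nat.dist i j = 1 then -t else 0)
    = (if i = j then (if i = 0 then (1:ℝ) else 1 + t ^ 2) else 0)
      + (if i = j + 1 then -t else 0) + (if j = i + 1 then -t else 0) := by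
  by_cases h1 : i = j
  · rw [if_pos h1, if_pos h1, if_neg (by omega : ¬ i = j + 1), if_neg (by omega : ¬ j = i + 1)]; ring
  · rw [if_neg h1, if_neg h1]
    by_cases h2 : i = j + 1
    · rw [if_pos (by simp only [Nat.dist]; omega : Nat.dist i j = 1), if_pos h2,
        if_neg (by omega : ¬ j = i + 1)]; ring
    · by_cases h3 : j = i + 1
      · rw [if_pos (by simp only [Nat.dist]; omega : Nat.dist i j = 1), if_neg h2, if_pos h3]; ring
      · rw [if_neg (by simp only [Nat.dist]; omega : ¬ Nat.dist i j = 1), if_neg h2, if_neg h3]; ring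

set_option maxHeartbeats 1600000 in
/-- every eigenvalue `μ` of `T` satisfies `(1 − t)² ≤ μ ≤ (1 + t)²`. -/
theorem Tmat_eigenvalue_bounds (n : ℕ) (hn : 1 ≤ n) (t : ℝ) (ht0 : 0 ≤ t) (ht1 : t ≤ 1)
    (μ : ℝ) (x : Fin n → ℝ) (hx : x ≠ 0) (heig : (Tmat n t).mulVec x = μ • x) :
    (1 - t) ^ 2 ≤ μ ∧ μ ≤ (1 + t) ^ 2 := by
  classical
  obtain ⟨m, rfl⟩ : ∃ m, n = m + 1 := ⟨n - 1, by omega⟩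
  set y : ℕ → ℝ := fun i => if h : i < m + 1 then x ⟨i, h⟩ else 0 with hy
  have hyx : ∀ i : Fin (m + 1), y (i : ℕ) = x i := by
    intro i; simp only [hy]; rw [dif_pos i.isLt]
  have hytop : ∀ k, m + 1 ≤ k → y k = 0 := by
    intro k hk; simp only [hy]; rw [dif_neg (by omega)]
  -- the ℕ-indexed entry function
  set Tn : ℕ → ℕ → ℝ := fun i j =>
    if i = j then (if i = 0 then (1:ℝ) else 1 + t ^ 2)
    else if Nat.dist i j = 1 then -t else 0 with hTn
  have hTval : ∀ i j : Fin (m + 1), Tmat (m + 1) t i j = Tn (i : ℕ) (j : ℕ) := by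
    intro i j
    simp only [Tmat, Matrix.of_apply, hTn, Fin.ext_iff]
  set S : ℝ := ∑ i ∈ range (m + 1), y i ^ 2 with hS
  set S' : ℝ := ∑ i ∈ range (m + 1), y (i + 1) ^ 2 with hS'
  set P : ℝ := ∑ i ∈ range (m + 1), y i * y (i + 1) with hP
  -- the quadratic form, two evaluations
  have hQ1 : ∑ i : Fin (m + 1), x i * ((Tmat (m + 1) t).mulVec x i) = μ * S := by
    rw [heig]
    have : ∀ i : Fin (m + 1), x i * (μ • x) i = μ * x i ^ 2 := by
      intro i; simp [Pi.smul_apply, smul_eq_mul]; ring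
    rw [Finset.sum_congr rfl fun i _ => this i, ← Finset.mul_sum]
    congr 1
    rw [hS, ← Fin.sum_univ_eq_sum_range (fun i => y i ^ 2)]
    exact Finset.sum_congr rfl fun i _ => by rw [hyx]
  have hQ2 : ∑ i : Fin (m + 1), x i * ((Tmat (m + 1) t).mulVec x i)
      = ∑ i ∈ range (m + 1), ∑ j ∈ range (m + 1), y i * (Tn i j * y j) := by
    have step : ∀ i : Fin (m + 1), x i * ((Tmat (m + 1) t).mulVec x i)
        = y (i : ℕ) * ∑ j ∈ range (m + 1), Tn (i : ℕ) j * y j := by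
      intro i
      have hmv : (Tmat (m + 1) t).mulVec x i = ∑ j : Fin (m + 1), Tmat (m + 1) t i j * x j := by
        simp [Matrix.mulVec, dotProduct]
      rw [hmv, hyx]
      congr 1
      rw [← Fin.sum_univ_eq_sum_range (fun j => Tn (i : ℕ) j * y j)]
      exact Finset.sum_congr rfl fun j _ => by rw [hTval, hyx]
    rw [Finset.sum_congr rfl fun i _ => step i,
      ← Fin.sum_univ_eq_sum_range
        (fun i => ∑ j ∈ range (m + 1), y i * (Tn i j * y j))]
    exact Finset.sum_congr rfl fun i _ => by rw [Finset.mul_sum]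
  -- expand the double sum
  have hdouble : ∑ i ∈ range (m + 1), ∑ j ∈ range (m + 1), y i * (Tn i j * y j)
      = (∑ i ∈ range (m + 1), (if i = 0 then (1:ℝ) else 1 + t ^ 2) * (y i * y i))
        - t * (∑ j ∈ range (m + 1), y (j + 1) * y j) - t * P := by
    have expand : ∀ i ∈ range (m + 1), ∀ j ∈ range (m + 1),
        y i * (Tn i j * y j)
        = (if i = j then (if i = 0 then (1:ℝ) else 1 + t ^ 2) * (y i * y j) else 0)
          + (if i = j + 1 then -t * (y i * y j) else 0)
          + (if j = i + 1 then -t * (y i * y j) else 0) := by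
      intro i _ j _
      rw [hTn]; dsimp only
      rw [tsplit]
      split_ifs <;> ring
    rw [Finset.sum_congr rfl fun i hi => Finset.sum_congr rfl fun j hj => expand i hi j hj]
    have split1 : ∀ i ∈ range (m + 1),
        (∑ j ∈ range (m + 1),
          ((if i = j then (if i = 0 then (1:ℝ) else 1 + t ^ 2) * (y i * y j) else 0)
            + (if i = j + 1 then -t * (y i * y j) else 0)
            + (if j = i + 1 then -t * (y i * y j) else 0)))
        = (∑ j ∈ range (m + 1), (if i = j then (if i = 0 then (1:ℝ) else 1 + t ^ 2) * (y i * y j) else 0))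
          + (∑ j ∈ range (m + 1), (if i = j + 1 then -t * (y i * y j) else 0))
          + (∑ j ∈ range (m + 1), (if j = i + 1 then -t * (y i * y j) else 0)) := by
      intro i _
      rw [Finset.sum_add_distrib, Finset.sum_add_distrib]
    rw [Finset.sum_congr rfl split1, Finset.sum_add_distrib, Finset.sum_add_distrib]
    have hA : ∑ i ∈ range (m + 1),
        (∑ j ∈ range (m + 1), (if i = j then (if i = 0 then (1:ℝ) else 1 + t ^ 2) * (y i * y j) else 0))
        = ∑ i ∈ range (m + 1), (if i = 0 then (1:ℝ) else 1 + t ^ 2) * (y i * y i) := by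
      refine Finset.sum_congr rfl fun i hi => ?_
      rw [Finset.sum_ite_eq, if_pos hi]
    have hB : ∑ i ∈ range (m + 1),
        (∑ j ∈ range (m + 1), (if i = j + 1 then -t * (y i * y j) else 0))
        = - (t * (∑ j ∈ range (m + 1), y (j + 1) * y j)) := by
      rw [Finset.sum_comm]
      rw [Finset.mul_sum, ← Finset.sum_neg_distrib]
      refine Finset.sum_congr rfl fun j hj => ?_
      rw [Finset.sum_ite_eq']
      by_cases h : j + 1 ∈ range (m + 1)
      · rw [if_pos h]; ring
      · rw [if_neg h]
        have : y (j + 1) = 0 := hytop _ (by simp at h; omega)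
        rw [this]; ring
    have hC : ∑ i ∈ range (m + 1),
        (∑ j ∈ range (m + 1), (if j = i + 1 then -t * (y i * y j) else 0))
        = - (t * P) := by
      rw [hP, Finset.mul_sum, ← Finset.sum_neg_distrib]
      refine Finset.sum_congr rfl fun i hi => ?_
      rw [Finset.sum_ite_eq']
      by_cases h : i + 1 ∈ range (m + 1)
      · rw [if_pos h]; ring
      · rw [if_neg h]
        have : y (i + 1) = 0 := hytop _ (by simp at h; omega)
        rw [this]; ring
    rw [hA, hB, hC]; ring
  -- the shifted relations
  have hshift : S = S' + y 0 ^ 2 := by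
    rw [hS, hS', Finset.sum_range_succ' (fun i => y i ^ 2) m,
      Finset.sum_range_succ (fun i => y (i + 1) ^ 2) m,
      hytop (m + 1) le_rfl]
    ring
  have hdiag : ∑ i ∈ range (m + 1), (if i = 0 then (1:ℝ) else 1 + t ^ 2) * (y i * y i)
      = S + t ^ 2 * S' := by
    have hterm : ∀ i ∈ range (m + 1),
        (if i = 0 then (1:ℝ) else 1 + t ^ 2) * (y i * y i)
        = y i ^ 2 + (if i = 0 then (0:ℝ) else t ^ 2 * y i ^ 2) := by
      intro i _; split_ifs <;> ring
    rw [Finset.sum_congr rfl hterm, Finset.sum_add_distrib]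
    congr 1
    rw [Finset.sum_range_succ' (fun i => if i = 0 then (0:ℝ) else t ^ 2 * y i ^ 2) m]
    have e1 : ∀ i ∈ range m, (if i + 1 = 0 then (0:ℝ) else t ^ 2 * y (i + 1) ^ 2)
        = t ^ 2 * y (i + 1) ^ 2 := fun i _ => by simp
    rw [Finset.sum_congr rfl e1, if_pos rfl, add_zero, hS', Finset.mul_sum,
      Finset.sum_range_succ (fun i => t ^ 2 * y (i + 1) ^ 2) m,
      hytop (m + 1) le_rfl]
    ring
  have hPP : ∑ j ∈ range (m + 1), y (j + 1) * y j = P := by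
    rw [hP]; exact Finset.sum_congr rfl fun j _ => by ring
  -- main identity : μ S = S + t² S' − 2 t P
  have hmain : μ * S = S + t ^ 2 * S' - 2 * t * P := by
    rw [← hQ1, hQ2, hdouble, hdiag, hPP]; ring
  -- SOS representation
  have hR : S + t ^ 2 * S' - 2 * t * P = ∑ i ∈ range (m + 1), (y i - t * y (i + 1)) ^ 2 := by
    have : ∀ i ∈ range (m + 1), (y i - t * y (i + 1)) ^ 2
        = y i ^ 2 + t ^ 2 * y (i + 1) ^ 2 - 2 * t * (y i * y (i + 1)) := by
      intro i _; ring
    rw [Finset.sum_congr rfl this]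
    rw [Finset.sum_sub_distrib, Finset.sum_add_distrib, ← Finset.mul_sum, ← Finset.mul_sum]
    try rw [hS, hS', hP]
  -- positivity of S
  have hSpos : 0 < S := by
    obtain ⟨i, hi⟩ : ∃ i, x i ≠ 0 := Function.ne_iff.mp hx
    have hSx : S = ∑ i : Fin (m + 1), x i ^ 2 := by
      rw [hS, ← Fin.sum_univ_eq_sum_range (fun i => y i ^ 2)]
      exact Finset.sum_congr rfl fun i _ => by rw [hyx]
    rw [hSx]
    refine Finset.sum_pos' (fun j _ => sq_nonneg _) ⟨i, Finset.mem_univ i, ?_⟩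
    rcases lt_or_gt_of_ne hi with h | h <;> nlinarith
  have hS'nonneg : 0 ≤ S' := Finset.sum_nonneg fun i _ => sq_nonneg _
  -- bounds on the SOS
  have hlow : (1 - t) ^ 2 * S ≤ μ * S := by
    rw [hmain, hR]
    have h1 : ∑ i ∈ range (m + 1), (1 - t) * (y i ^ 2 - t * y (i + 1) ^ 2)
        ≤ ∑ i ∈ range (m + 1), (y i - t * y (i + 1)) ^ 2 := by
      refine Finset.sum_le_sum fun i _ => ?_
      nlinarith [sq_nonneg (y i - y (i + 1)), sq_nonneg (y i - t * y (i + 1))]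
    have h2 : (1 - t) * (S - t * S')
        = ∑ i ∈ range (m + 1), (1 - t) * (y i ^ 2 - t * y (i + 1) ^ 2) := by
      calc (1 - t) * (S - t * S') = (1 - t) * S - ((1 - t) * t) * S' := by ring
        _ = (∑ i ∈ range (m + 1), (1 - t) * y i ^ 2)
            - ∑ i ∈ range (m + 1), ((1 - t) * t) * y (i + 1) ^ 2 := by
          rw [hS, hS', Finset.mul_sum, Finset.mul_sum]
        _ = ∑ i ∈ range (m + 1), ((1 - t) * y i ^ 2 - ((1 - t) * t) * y (i + 1) ^ 2) :=
          (Finset.sum_sub_distrib _ _).symm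
        _ = ∑ i ∈ range (m + 1), (1 - t) * (y i ^ 2 - t * y (i + 1) ^ 2) :=
          Finset.sum_congr rfl fun i _ => by ring
    have h3 : (1 - t) ^ 2 * S ≤ (1 - t) * (S - t * S') := by
      nlinarith [mul_nonneg (mul_nonneg ht0 (by linarith : (0:ℝ) ≤ 1 - t)) (sq_nonneg (y 0)),
        hshift]
    linarith
  have hhigh : μ * S ≤ (1 + t) ^ 2 * S := by
    rw [hmain, hR]
    have h1 : ∑ i ∈ range (m + 1), (y i - t * y (i + 1)) ^ 2
        ≤ ∑ i ∈ range (m + 1), (1 + t) * (y i ^ 2 + t * y (i + 1) ^ 2) := by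
      refine Finset.sum_le_sum fun i _ => ?_
      nlinarith [sq_nonneg (y i + y (i + 1))]
    have h2 : (1 + t) * (S + t * S')
        = ∑ i ∈ range (m + 1), (1 + t) * (y i ^ 2 + t * y (i + 1) ^ 2) := by
      calc (1 + t) * (S + t * S') = (1 + t) * S + ((1 + t) * t) * S' := by ring
        _ = (∑ i ∈ range (m + 1), (1 + t) * y i ^ 2)
            + ∑ i ∈ range (m + 1), ((1 + t) * t) * y (i + 1) ^ 2 := by
          rw [hS, hS', Finset.mul_sum, Finset.mul_sum]
        _ = ∑ i ∈ range (m + 1), ((1 + t) * y i ^ 2 + ((1 + t) * t) * y (i + 1) ^ 2) :=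
          Finset.sum_add_distrib.symm
        _ = ∑ i ∈ range (m + 1), (1 + t) * (y i ^ 2 + t * y (i + 1) ^ 2) :=
          Finset.sum_congr rfl fun i _ => by ring
    have h3 : (1 + t) * (S + t * S') ≤ (1 + t) ^ 2 * S := by
      nlinarith [mul_nonneg (mul_nonneg ht0 (by linarith : (0:ℝ) ≤ 1 + t)) (sq_nonneg (y 0)),
        hshift]
    linarith
  constructor
  · exact le_of_mul_le_mul_right (by linarith [hlow]) hSpos
  · exact le_of_mul_le_mul_right (by linarith [hhigh]) hSpos
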